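/- arXiv:2310.13199 — 3 statements merged into one kernel-verified Lean document; each statement's English description precedes it below -/
import Mathlib

section
/- Let C_A be the convex cone generated by vectors {v_i : i ∈ I_A} in a real Hilbert space, let w ∈ H, d = w − P_{C_A}(w), and define the working index set I_W = {i ∈ I_A : ⟨v_i, d⟩ = 0} and the cone C_W generated by {v_i : i ∈ I_W}. Then P_{C_W}(w) = P_{C_A}(w); consequently w − P_{C_W}(w) = d. -/
open RealInnerProductSpace

/-- Variational inequality for a minimizer over a convex set. -/
lemma vi_aux {H : Type*} [NormedAddCommGroup H] [InnerProductSpace ℝ H]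
    {K : Set H} (hK : Convex ℝ K) {w p : H} (hp : p ∈ K)
    (hmin : ∀ y ∈ K, ‖w - p‖ ≤ ‖w - y‖) :
    ∀ y ∈ K, ⟪w - p, y - p⟫ ≤ 0 := by
  haveI : Nonempty K := ⟨⟨p, hp⟩⟩
  have heq : ‖w - p‖ = ⨅ y : K, ‖w - y‖ := by
    refine le_antisymm (le_ciInf fun y => hmin y y.2) ?_
    exact ciInf_le ⟨0, fun r ⟨y, hy⟩ => hy ▸ norm_nonneg _⟩ (⟨p, hp⟩ : K)
  exact (norm_eq_iInf_iff_real_inner_le_zero hK hp).mp heq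

/-- The projections of `w` onto the full active cone `C_A` and onto the
working cone `C_W` coincide. -/
theorem stmt6 {H : Type*} [NormedAddCommGroup H] [InnerProductSpace ℝ H]
    {ι : Type*} [Fintype ι] (v : ι → H)
    (CA : Set H)
    (hCA : CA = {x | ∃ μ : ι → ℝ, (∀ i, 0 ≤ μ i) ∧ x = ∑ i, μ i • v i})
    (w pA : H) (hpA_mem : pA ∈ CA) (hpA : ∀ y ∈ CA, ‖w - pA‖ ≤ ‖w - y‖)
    (d : H) (hd : d = w - pA)
    (IW : Set ι) (hIW : IW = {i | ⟪v i, d⟫ = 0})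
    (CW : Set H)
    (hCW : CW = {x | ∃ μ : ι → ℝ, (∀ i, 0 ≤ μ i) ∧ (∀ i, i ∉ IW → μ i = 0) ∧
      x = ∑ i, μ i • v i})
    (pW : H) (hpW_mem : pW ∈ CW) (hpW : ∀ y ∈ CW, ‖w - pW‖ ≤ ‖w - y‖) :
    pW = pA ∧ w - pW = d := by
  classical
  -- Convexity of CA and CW
  have hconvA : Convex ℝ CA := by
    rw [hCA]
    rintro x ⟨μ, hμ, rfl⟩ y ⟨ν, hν, rfl⟩ a b ha hb hab
    refine ⟨fun i => a * μ i + b * ν i,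
      fun i => add_nonneg (mul_nonneg ha (hμ i)) (mul_nonneg hb (hν i)), ?_⟩
    rw [Finset.smul_sum, Finset.smul_sum, ← Finset.sum_add_distrib]
    simp [add_smul, mul_smul]
  have hconvW : Convex ℝ CW := by
    rw [hCW]
    rintro x ⟨μ, hμ, hμ0, rfl⟩ y ⟨ν, hν, hν0, rfl⟩ a b ha hb hab
    refine ⟨fun i => a * μ i + b * ν i,
      fun i => add_nonneg (mul_nonneg ha (hμ i)) (mul_nonneg hb (hν i)),
      fun i hi => by show a * μ i + b * ν i = 0; rw [hμ0 i hi, hν0 i hi]; ring, ?_⟩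
    rw [Finset.smul_sum, Finset.smul_sum, ← Finset.sum_add_distrib]
    simp [add_smul, mul_smul]
  have hVA := vi_aux hconvA hpA_mem hpA
  obtain ⟨μ, hμ, hμA⟩ := hCA ▸ hpA_mem
  -- ⟪d, pA⟫ = 0
  have h0 : (0 : H) ∈ CA := by
    rw [hCA]; exact ⟨fun _ => 0, fun _ => le_refl _, by simp⟩
  have h2pA : (2 : ℝ) • pA ∈ CA := by
    rw [hCA]
    exact ⟨fun i => 2 * μ i, fun i => mul_nonneg (by norm_num) (hμ i), by
      rw [hμA, Finset.smul_sum]; simp [mul_smul]⟩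
  have hdpA : ⟪d, pA⟫ = 0 := by
    have h1 := hVA 0 h0
    have h2 := hVA ((2:ℝ) • pA) h2pA
    rw [← hd] at h1 h2
    have e1 : ⟪d, (0:H) - pA⟫ = -⟪d, pA⟫ := by
      rw [zero_sub, inner_neg_right]
    have e2 : ⟪d, (2:ℝ) • pA - pA⟫ = ⟪d, pA⟫ := by
      have : (2:ℝ) • pA - pA = pA := by
        rw [two_smul]; abel
      rw [this]
    rw [e1] at h1; rw [e2] at h2
    linarith
  -- ⟪d, v i⟫ ≤ 0 for all i
  have hdv : ∀ i, ⟪d, v i⟫ ≤ 0 := by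
    intro i
    have hmem : pA + v i ∈ CA := by
      rw [hCA]
      refine ⟨fun j => μ j + if j = i then 1 else 0,
        fun j => add_nonneg (hμ j) (by split <;> norm_num), ?_⟩
      rw [hμA]
      simp [add_smul, Finset.sum_add_distrib, ite_smul]
    have := hVA (pA + v i) hmem
    rw [← hd] at this
    simpa using this
  -- pA ∈ CW
  have hsum0 : ∑ i, μ i * ⟪d, v i⟫ = 0 := by
    have : ⟪d, pA⟫ = ∑ i, μ i * ⟪d, v i⟫ := by
      rw [hμA, inner_sum]
      exact Finset.sum_congr rfl fun i _ => real_inner_smul_right _ _ _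
    rw [← this, hdpA]
  have hterm : ∀ i ∈ Finset.univ, μ i * ⟪d, v i⟫ = 0 := by
    rw [← Finset.sum_eq_zero_iff_of_nonpos]
    · exact hsum0
    · exact fun i _ => mul_nonpos_of_nonneg_of_nonpos (hμ i) (hdv i)
  have hpA_CW : pA ∈ CW := by
    rw [hCW]
    refine ⟨μ, hμ, fun i hi => ?_, hμA⟩
    rw [hIW] at hi
    have hne : ⟪v i, d⟫ ≠ 0 := hi
    have := hterm i (Finset.mem_univ i)
    rcases mul_eq_zero.mp this with h | h
    · exact h
    · exact absurd (by rw [real_inner_comm] at h; exact h) hne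
  -- CW ⊆ CA
  have hWsubA : CW ⊆ CA := by
    rw [hCW, hCA]
    rintro x ⟨ν, hν, _, rfl⟩
    exact ⟨ν, hν, rfl⟩
  -- norms equal
  have hle1 : ‖w - pW‖ ≤ ‖w - pA‖ := hpW pA hpA_CW
  have hle2 : ‖w - pA‖ ≤ ‖w - pW‖ := hpA pW (hWsubA hpW_mem)
  have hAminW : ∀ y ∈ CW, ‖w - pA‖ ≤ ‖w - y‖ := fun y hy =>
    le_trans hle2 (hpW y hy)
  have hVW1 := vi_aux hconvW hpW_mem hpW pA hpA_CW
  have hVW2 := vi_aux hconvW hpA_CW hAminW pW hpW_mem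
  have key : ⟪pW - pA, pW - pA⟫ ≤ 0 := by
    have : ⟪w - pA, pW - pA⟫ + ⟪w - pW, pA - pW⟫ ≤ 0 := add_nonpos hVW2 hVW1
    have e : ⟪w - pA, pW - pA⟫ + ⟪w - pW, pA - pW⟫ = ⟪pW - pA, pW - pA⟫ := by
      have h1 : ⟪w - pW, pA - pW⟫ = -⟪w - pW, pW - pA⟫ := by
        rw [← inner_neg_right]; congr 1; abel
      rw [h1, ← sub_eq_add_neg, ← inner_sub_left]
      congr 1; abel
    linarith [e ▸ this]
  have hpWpA : pW = pA := by
    have := real_inner_self_nonpos.mp key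
    exact sub_eq_zero.mp this
  exact ⟨hpWpA, by rw [hpWpA, hd]⟩
end

section
/- Let I_B be an index set with I_W ⊆ I_B ⊆ I_A, where I_A indexes vectors {v_i} in a Hilbert space H, w ∈ H, d = w − P_{C_A}(w), and I_W = {i ∈ I_A : ⟨v_i, d⟩ = 0}. Let C_B be the cone generated by {v_i : i ∈ I_B}. Then P_{C_W}(w) = P_{C_B}(w) = P_{C_A}(w), and hence w − P_{C_B}(w) = d. -/
open RealInnerProductSpace

/-- Uniqueness of the nearest point in a convex set. -/
lemma proj_unique_aux {H : Type*} [NormedAddCommGroup H] [InnerProductSpace ℝ H]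
    {S : Set H} (hS : Convex ℝ S) {w p q : H} (hp : p ∈ S) (hq : q ∈ S)
    (hpm : ∀ y ∈ S, ‖w - p‖ ≤ ‖w - y‖) (hqm : ∀ y ∈ S, ‖w - q‖ ≤ ‖w - y‖) :
    p = q := by
  have hm : (1/2 : ℝ) • p + (1/2 : ℝ) • q ∈ S :=
    hS hp hq (by norm_num) (by norm_num) (by norm_num)
  set a := w - p with ha
  set b := w - q with hb
  have hab : ‖a‖ = ‖b‖ := le_antisymm (hpm q hq) (hqm p hp)
  have h1 : ‖a‖ ≤ ‖w - ((1/2 : ℝ) • p + (1/2 : ℝ) • q)‖ := hpm _ hm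
  have h2 : w - ((1/2 : ℝ) • p + (1/2 : ℝ) • q) = (1/2 : ℝ) • (a + b) := by
    rw [ha, hb]; module
  rw [h2, norm_smul, show ‖(1/2 : ℝ)‖ = 1/2 by norm_num] at h1
  have hpar := parallelogram_law_with_norm ℝ a b
  have h3 : ‖a - b‖ = 0 := by
    have h4 : 2 * ‖a‖ ≤ ‖a + b‖ := by linarith
    nlinarith [norm_nonneg (a - b), norm_nonneg a]
  have h5 : a - b = 0 := norm_eq_zero.mp h3
  have h6 : q - p = 0 := by
    have : a - b = q - p := by rw [ha, hb]; abel
    rw [← this]; exact h5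
  have := sub_eq_zero.mp h6
  exact this.symm

/-- Variational inequality for the nearest point in a convex set. -/
lemma varineq_aux {H : Type*} [NormedAddCommGroup H] [InnerProductSpace ℝ H]
    {S : Set H} (hS : Convex ℝ S) {w p : H} (hp : p ∈ S)
    (hmin : ∀ y ∈ S, ‖w - p‖ ≤ ‖w - y‖) :
    ∀ y ∈ S, ⟪w - p, y - p⟫ ≤ 0 := by
  haveI : Nonempty S := ⟨⟨p, hp⟩⟩
  apply (norm_eq_iInf_iff_real_inner_le_zero hS hp).mp
  apply le_antisymm
  · exact le_ciInf fun y => hmin y y.2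
  · have hb : BddBelow (Set.range fun y : S => ‖w - (y : H)‖) := by
      refine ⟨0, ?_⟩
      rintro x ⟨y, rfl⟩
      positivity
    exact ciInf_le hb ⟨p, hp⟩

/-- For any index set `I_B` with `I_W ⊆ I_B ⊆ I_A`, the projections of `w`
onto `C_W`, `C_B` and `C_A` all coincide. -/
theorem stmt8 {H : Type*} [NormedAddCommGroup H] [InnerProductSpace ℝ H]
    {ι : Type*} [Fintype ι] (v : ι → H)
    (CA : Set H)
    (hCA : CA = {x | ∃ μ : ι → ℝ, (∀ i, 0 ≤ μ i) ∧ x = ∑ i, μ i • v i})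
    (w pA : H) (hpA_mem : pA ∈ CA) (hpA : ∀ y ∈ CA, ‖w - pA‖ ≤ ‖w - y‖)
    (d : H) (hd : d = w - pA)
    (IW : Set ι) (hIW : IW = {i | ⟪v i, d⟫ = 0})
    (IB : Set ι) (hWB : IW ⊆ IB)
    (CW : Set H)
    (hCW : CW = {x | ∃ μ : ι → ℝ, (∀ i, 0 ≤ μ i) ∧ (∀ i, i ∉ IW → μ i = 0) ∧
      x = ∑ i, μ i • v i})
    (CB : Set H)
    (hCB : CB = {x | ∃ μ : ι → ℝ, (∀ i, 0 ≤ μ i) ∧ (∀ i, i ∉ IB → μ i = 0) ∧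
      x = ∑ i, μ i • v i})
    (pW : H) (hpW_mem : pW ∈ CW) (hpW : ∀ y ∈ CW, ‖w - pW‖ ≤ ‖w - y‖)
    (pB : H) (hpB_mem : pB ∈ CB) (hpB : ∀ y ∈ CB, ‖w - pB‖ ≤ ‖w - y‖) :
    pW = pB ∧ pB = pA ∧ w - pB = d := by
  classical
  subst hCA hCW hCB hIW hd
  -- convexity
  have combo : ∀ (μ ν : ι → ℝ) (a b : ℝ),
      a • (∑ i, μ i • v i) + b • (∑ i, ν i • v i) = ∑ i, (a * μ i + b * ν i) • v i := by
    intro μ ν a b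
    rw [Finset.smul_sum, Finset.smul_sum, ← Finset.sum_add_distrib]
    congr 1; ext i; rw [add_smul, smul_smul, smul_smul]
  have hconvA : Convex ℝ {x | ∃ μ : ι → ℝ, (∀ i, 0 ≤ μ i) ∧ x = ∑ i, μ i • v i} := by
    rintro x ⟨μ, hμ, rfl⟩ y ⟨ν, hν, rfl⟩ a b ha hb hab
    exact ⟨fun i => a * μ i + b * ν i,
      fun i => add_nonneg (mul_nonneg ha (hμ i)) (mul_nonneg hb (hν i)), combo μ ν a b⟩
  have hconvW : Convex ℝ {x | ∃ μ : ι → ℝ, (∀ i, 0 ≤ μ i) ∧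
      (∀ i, i ∉ {i | ⟪v i, w - pA⟫ = 0} → μ i = 0) ∧ x = ∑ i, μ i • v i} := by
    rintro x ⟨μ, hμ, hμ0, rfl⟩ y ⟨ν, hν, hν0, rfl⟩ a b ha hb hab
    exact ⟨fun i => a * μ i + b * ν i,
      fun i => add_nonneg (mul_nonneg ha (hμ i)) (mul_nonneg hb (hν i)),
      fun i hi => by simp only [hμ0 i hi, hν0 i hi, mul_zero, add_zero],
      combo μ ν a b⟩
  have hconvB : Convex ℝ {x | ∃ μ : ι → ℝ, (∀ i, 0 ≤ μ i) ∧
      (∀ i, i ∉ IB → μ i = 0) ∧ x = ∑ i, μ i • v i} := by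
    rintro x ⟨μ, hμ, hμ0, rfl⟩ y ⟨ν, hν, hν0, rfl⟩ a b ha hb hab
    exact ⟨fun i => a * μ i + b * ν i,
      fun i => add_nonneg (mul_nonneg ha (hμ i)) (mul_nonneg hb (hν i)),
      fun i hi => by simp only [hμ0 i hi, hν0 i hi, mul_zero, add_zero],
      combo μ ν a b⟩
  -- variational inequality on CA
  have hvar := varineq_aux hconvA hpA_mem hpA
  -- ⟪w - pA, pA⟫ = 0
  have h0mem : (0 : H) ∈ {x | ∃ μ : ι → ℝ, (∀ i, 0 ≤ μ i) ∧ x = ∑ i, μ i • v i} :=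
    ⟨fun _ => 0, fun _ => le_refl 0, by simp⟩
  have h2mem : (2 : ℝ) • pA ∈ {x | ∃ μ : ι → ℝ, (∀ i, 0 ≤ μ i) ∧ x = ∑ i, μ i • v i} := by
    obtain ⟨μ, hμ, rfl⟩ := hpA_mem
    exact ⟨fun i => 2 * μ i, fun i => mul_nonneg (by norm_num) (hμ i), by
      rw [Finset.smul_sum]; congr 1; ext i; rw [smul_smul]⟩
  have hdp : ⟪w - pA, pA⟫ = 0 := by
    have l1 := hvar 0 h0mem
    have l2 := hvar ((2 : ℝ) • pA) h2mem
    have e1 : (0 : H) - pA = -pA := by abel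
    have e2 : (2 : ℝ) • pA - pA = pA := by module
    rw [e1, inner_neg_right] at l1
    rw [e2] at l2
    linarith
  -- ⟪w - pA, v i⟫ ≤ 0
  have hvi : ∀ i, ⟪w - pA, v i⟫ ≤ 0 := by
    intro i
    have hmem : v i ∈ {x | ∃ μ : ι → ℝ, (∀ i, 0 ≤ μ i) ∧ x = ∑ i, μ i • v i} :=
      ⟨fun j => if j = i then 1 else 0,
        fun j => by by_cases h : j = i <;> simp [h],
        by simp [ite_smul]⟩
    have := hvar (v i) hmem
    rw [inner_sub_right, hdp] at this
    linarith
  -- pA ∈ CW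
  obtain ⟨μ, hμ, hμsum⟩ := hpA_mem
  have hsum0 : ∑ i, μ i * ⟪w - pA, v i⟫ = 0 := by
    have : ⟪w - pA, ∑ i, μ i • v i⟫ = ∑ i, μ i * ⟪w - pA, v i⟫ := by
      rw [inner_sum]; congr 1; ext i; rw [real_inner_smul_right]
    rw [← this, ← hμsum, hdp]
  have hterm : ∀ i ∈ Finset.univ, μ i * ⟪w - pA, v i⟫ = 0 := by
    rw [← Finset.sum_eq_zero_iff_of_nonpos]
    · exact hsum0
    · intro i _
      exact mul_nonpos_of_nonneg_of_nonpos (hμ i) (hvi i)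
  have hμ0 : ∀ i, i ∉ {i | ⟪v i, w - pA⟫ = 0} → μ i = 0 := by
    intro i hi
    by_contra hne
    have hpos : 0 < μ i := lt_of_le_of_ne (hμ i) (Ne.symm hne)
    have := hterm i (Finset.mem_univ i)
    have h0 : ⟪w - pA, v i⟫ = 0 := by
      rcases mul_eq_zero.mp this with h | h
      · exact absurd h hne
      · exact h
    exact hi (by simpa [Set.mem_setOf_eq, real_inner_comm] using h0)
  have hpA_CW : pA ∈ {x | ∃ μ : ι → ℝ, (∀ i, 0 ≤ μ i) ∧
      (∀ i, i ∉ {i | ⟪v i, w - pA⟫ = 0} → μ i = 0) ∧ x = ∑ i, μ i • v i} :=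
    ⟨μ, hμ, hμ0, hμsum⟩
  have hpA_CB : pA ∈ {x | ∃ μ : ι → ℝ, (∀ i, 0 ≤ μ i) ∧
      (∀ i, i ∉ IB → μ i = 0) ∧ x = ∑ i, μ i • v i} :=
    ⟨μ, hμ, fun i hi => hμ0 i (fun h => hi (hWB h)), hμsum⟩
  -- inclusions into CA
  have hsubB : {x | ∃ μ : ι → ℝ, (∀ i, 0 ≤ μ i) ∧ (∀ i, i ∉ IB → μ i = 0) ∧
      x = ∑ i, μ i • v i} ⊆ {x | ∃ μ : ι → ℝ, (∀ i, 0 ≤ μ i) ∧ x = ∑ i, μ i • v i} := by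
    rintro x ⟨μ, h1, h2, h3⟩; exact ⟨μ, h1, h3⟩
  have hsubW : {x | ∃ μ : ι → ℝ, (∀ i, 0 ≤ μ i) ∧
      (∀ i, i ∉ {i | ⟪v i, w - pA⟫ = 0} → μ i = 0) ∧ x = ∑ i, μ i • v i} ⊆
      {x | ∃ μ : ι → ℝ, (∀ i, 0 ≤ μ i) ∧ x = ∑ i, μ i • v i} := by
    rintro x ⟨μ, h1, h2, h3⟩; exact ⟨μ, h1, h3⟩
  have hWA : pW = pA :=
    proj_unique_aux hconvW hpW_mem hpA_CW hpW (fun y hy => hpA y (hsubW hy))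
  have hBA : pB = pA :=
    proj_unique_aux hconvB hpB_mem hpA_CB hpB (fun y hy => hpA y (hsubB hy))
  exact ⟨hWA.trans hBA.symm, hBA, by rw [hBA]⟩
end

section
/- Superlinear correctability: let J, g_1, …, g_m : ℝⁿ → ℝ be C¹, u feasible with working index set I_W = {1,…,k} ⊆ I_A(u) (so g_i(u) = 0 for i ≤ k), assume the gradients g_1'(u),…,g_k'(u) are linearly independent, and let d ∈ ℝⁿ satisfy ⟨g_i'(u), d⟩ = 0 for all i ∈ I_W. Assume each g_i is C¹ in a neighborhood of u. Then there exist t₀ > 0 and C¹ functions c_1, …, c_k : (−t₀, t₀) → ℝ with c_i(0) = 0, c_i'(0) = 0 (hence c_i(t) = o(t)), such that for u(t) = u + t d + Σ_{i=1}^k c_i(t) g_i'(u), we have g_i(u(t)) = 0 for all i ∈ I_W and all |t| < t₀. -/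
open RealInnerProductSpace


theorem stmt15_aux {k : ℕ} {E : Type*} [NormedAddCommGroup E] [InnerProductSpace ℝ E]
    [FiniteDimensional ℝ E]
    (f : Fin k → E → ℝ) (hf : ∀ i, ContDiff ℝ 1 (f i))
    (u : E) (hactive : ∀ i, f i u = 0)
    (hli : LinearIndependent ℝ (fun i => gradient (f i) u))
    (d : E) (hd : ∀ i, ⟪gradient (f i) u, d⟫ = 0) :
    ∃ t₀ : ℝ, 0 < t₀ ∧ ∃ c : Fin k → ℝ → ℝ,
      (∀ i, ContDiffOn ℝ 1 (c i) (Set.Ioo (-t₀) t₀)) ∧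
      (∀ i, c i 0 = 0) ∧ (∀ i, deriv (c i) 0 = 0) ∧
      ∀ t : ℝ, |t| < t₀ → ∀ i,
        f i (u + t • d + ∑ j, c j t • gradient (f j) u) = 0 := by
  classical
  set v : Fin k → E := fun i => gradient (f i) u with hv
  -- the linear combination map
  set A : (Fin k → ℝ) →L[ℝ] E :=
    ∑ j, (ContinuousLinearMap.proj j).smulRight (v j) with hA
  have hA_apply : ∀ c : Fin k → ℝ, A c = ∑ j, c j • v j := by
    intro c; simp [hA]
  -- Gram operator
  set N : (Fin k → ℝ) →L[ℝ] (Fin k → ℝ) :=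
    ContinuousLinearMap.pi
      (fun i => ((InnerProductSpace.toDual ℝ E (v i) : E →L[ℝ] ℝ)).comp A) with hN
  have hN_apply : ∀ c i, N c i = ⟪v i, A c⟫ := by
    intro c i; simp [hN]
  have hNinj : Function.Injective N := by
    rw [← ContinuousLinearMap.coe_coe, ← LinearMap.ker_eq_bot,
      LinearMap.ker_eq_bot']
    intro c hc
    have hc' : ∀ i, ⟪v i, A c⟫ = 0 := by
      intro i; rw [← hN_apply]; exact congrFun hc i
    have hAc : A c = 0 := by
      have h1 : ⟪A c, A c⟫ = 0 := by
        nth_rewrite 1 [hA_apply]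
        rw [sum_inner]
        refine Finset.sum_eq_zero fun i _ => ?_
        rw [real_inner_smul_left, hc' i, mul_zero]
      exact inner_self_eq_zero.mp h1
    funext i
    refine linearIndependent_iff'.mp hli Finset.univ c ?_ i (Finset.mem_univ i)
    rw [← hA_apply]; exact hAc
  set Ne : (Fin k → ℝ) ≃L[ℝ] (Fin k → ℝ) :=
    (LinearEquiv.ofInjectiveEndo (N : (Fin k → ℝ) →ₗ[ℝ] (Fin k → ℝ)) hNinj).toContinuousLinearEquiv
    with hNe
  have hNe_apply : ∀ c, Ne c = N c := fun c => rfl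
  -- the full map
  set L : (ℝ × (Fin k → ℝ)) →L[ℝ] E :=
    (ContinuousLinearMap.fst ℝ ℝ (Fin k → ℝ)).smulRight d +
      A.comp (ContinuousLinearMap.snd ℝ ℝ (Fin k → ℝ)) with hL
  have hL_apply : ∀ p : ℝ × (Fin k → ℝ), L p = p.1 • d + A p.2 := by
    intro p; simp [hL]
  set ψ : (ℝ × (Fin k → ℝ)) → E := fun p => u + L p with hψ
  have hψ0 : ψ 0 = u := by simp [hψ]
  set G : (ℝ × (Fin k → ℝ)) → (Fin k → ℝ) := fun p i => f i (ψ p) with hG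
  set H : (ℝ × (Fin k → ℝ)) → (ℝ × (Fin k → ℝ)) := fun p => (p.1, G p) with hH
  have hH0 : H 0 = 0 := by
    have : G 0 = 0 := by
      funext i; simp only [hG, hψ0]; exact hactive i
    simp [hH, this]
  -- smoothness of H
  have hψs : ContDiff ℝ 1 ψ := contDiff_const.add L.contDiff
  have hHs : ContDiff ℝ 1 H := by
    refine contDiff_fst.prodMk (contDiff_pi.2 fun i => ?_)
    exact (hf i).comp hψs
  -- derivative of H at 0
  set E' : (ℝ × (Fin k → ℝ)) ≃L[ℝ] (ℝ × (Fin k → ℝ)) :=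
    (ContinuousLinearEquiv.refl ℝ ℝ).prodCongr Ne with hE'
  have hgrad : ∀ i, HasFDerivAt (f i)
      ((InnerProductSpace.toDual ℝ E (v i) : E →L[ℝ] ℝ)) u := by
    intro i
    exact hasGradientAt_iff_hasFDerivAt.mp
      (((hf i).differentiable one_ne_zero u).hasGradientAt)
  have hψ' : HasFDerivAt ψ L 0 := L.hasFDerivAt.const_add u
  have hG' : HasFDerivAt G
      (ContinuousLinearMap.pi fun i =>
        ((InnerProductSpace.toDual ℝ E (v i) : E →L[ℝ] ℝ)).comp L) 0 := by
    apply hasFDerivAt_pi''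
    intro i
    rw [ContinuousLinearMap.proj_pi]
    have := ((hψ0 ▸ hgrad i).comp (0 : ℝ × (Fin k → ℝ)) hψ')
    exact this
  have hH' : HasFDerivAt H (E' : (ℝ × (Fin k → ℝ)) →L[ℝ] (ℝ × (Fin k → ℝ))) 0 := by
    have h1 := (hasFDerivAt_fst (p := (0 : ℝ × (Fin k → ℝ)))).prodMk hG'
    refine h1.congr_fderiv (Eq.symm ?_)
    apply ContinuousLinearMap.ext
    intro p
    refine Prod.ext ?_ ?_
    · rfl
    · show Ne p.2 = _
      funext i
      rw [hNe_apply, hN_apply]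
      show _ = (InnerProductSpace.toDual ℝ E (v i)) (L p)
      rw [InnerProductSpace.toDual_apply_apply, hL_apply, inner_add_right,
        real_inner_smul_right, hd i, mul_zero, zero_add]
  -- local inverse
  have hstrict : HasStrictFDerivAt H
      (E' : (ℝ × (Fin k → ℝ)) →L[ℝ] (ℝ × (Fin k → ℝ))) 0 :=
    hHs.contDiffAt.hasStrictFDerivAt' hH' one_ne_zero
  set φ : (ℝ × (Fin k → ℝ)) → (ℝ × (Fin k → ℝ)) := hstrict.localInverse H E' 0 with hφ
  have hφ0 : φ 0 = 0 := by
    have := hstrict.localInverse_apply_image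
    rwa [hH0] at this
  have hev : ∀ᶠ y in nhds (0 : ℝ × (Fin k → ℝ)), H (φ y) = y := by
    have := hstrict.eventually_right_inverse
    rwa [hH0] at this
  have hφc : ContDiffAt ℝ 1 φ 0 := by
    have := hHs.contDiffAt.to_localInverse (f' := E') hH' one_ne_zero
    rw [hH0] at this
    exact this
  set ι : ℝ →L[ℝ] ℝ × (Fin k → ℝ) := (ContinuousLinearMap.id ℝ ℝ).prod 0 with hι
  have hι_apply : ∀ t : ℝ, ι t = (t, 0) := fun t => rfl
  have hι0 : ι 0 = 0 := by simp
  set c : Fin k → ℝ → ℝ := fun i t => (φ (ι t)).2 i with hc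
  have hΦc : ContDiffAt ℝ 1 (fun t => φ (ι t)) 0 := by
    have h1 : ContDiffAt ℝ 1 φ (ι 0) := by rw [hι0]; exact hφc
    exact h1.comp 0 ι.contDiff.contDiffAt
  obtain ⟨s, hs_mem, hs_cd⟩ := hΦc.contDiffOn le_rfl (by simp)
  have hev2 : ∀ᶠ t in nhds (0:ℝ), H (φ (ι t)) = ι t := by
    have htend : Filter.Tendsto ι (nhds 0) (nhds 0) := by
      simpa [hι0] using (ι.continuous.continuousAt (x := (0:ℝ))).tendsto
    exact htend.eventually hev
  have hmem : s ∩ {t | H (φ (ι t)) = ι t} ∈ nhds (0:ℝ) := Filter.inter_mem hs_mem hev2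
  obtain ⟨ε, hε, hball⟩ := Metric.mem_nhds_iff.mp hmem
  have hIoo : ∀ t : ℝ, |t| < ε → t ∈ Metric.ball (0:ℝ) ε := by
    intro t ht; simpa [Real.norm_eq_abs] using ht
  refine ⟨ε, hε, c, ?_, ?_, ?_, ?_⟩
  · intro i
    have hsub : Set.Ioo (-ε) ε ⊆ s := by
      intro t ht
      have : t ∈ Metric.ball (0:ℝ) ε := by
        rw [Real.ball_eq_Ioo]; simpa using ht
      exact (hball this).1
    have h1 : ContDiffOn ℝ 1 (fun t => φ (ι t)) (Set.Ioo (-ε) ε) := hs_cd.mono hsub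
    have hproj : ContDiff ℝ 1 (fun p : ℝ × (Fin k → ℝ) => p.2 i) :=
      (contDiff_pi.mp contDiff_id i).comp contDiff_snd
    exact hproj.comp_contDiffOn h1
  · intro i
    simp only [hc, hι0, hφ0]
    rfl
  · intro i
    have hφ' : HasStrictFDerivAt φ
        ((E'.symm : (ℝ × (Fin k → ℝ)) →L[ℝ] (ℝ × (Fin k → ℝ)))) 0 := by
      have := hstrict.to_localInverse
      rwa [hH0] at this
    have hcomp : HasFDerivAt (fun t => φ (ι t))
        (((E'.symm : (ℝ × (Fin k → ℝ)) →L[ℝ] (ℝ × (Fin k → ℝ)))).comp ι) 0 := by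
      have hφd : HasFDerivAt φ
          ((E'.symm : (ℝ × (Fin k → ℝ)) →L[ℝ] (ℝ × (Fin k → ℝ)))) (ι 0) := by
        rw [hι0]; exact hφ'.hasFDerivAt
      exact hφd.comp 0 ι.hasFDerivAt
    set π : (ℝ × (Fin k → ℝ)) →L[ℝ] ℝ :=
      (ContinuousLinearMap.proj i).comp (ContinuousLinearMap.snd ℝ ℝ (Fin k → ℝ)) with hπ
    have hci : HasFDerivAt (c i)
        (π.comp (((E'.symm : (ℝ × (Fin k → ℝ)) →L[ℝ] (ℝ × (Fin k → ℝ)))).comp ι)) 0 :=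
      π.hasFDerivAt.comp 0 hcomp
    have hder := hci.hasDerivAt.deriv
    rw [hder]
    have hsymm : E'.symm ((1:ℝ), (0 : Fin k → ℝ)) = (1, 0) := by
      rw [ContinuousLinearEquiv.symm_apply_eq]
      simp [hE', map_zero]
    show π (E'.symm (ι 1)) = 0
    rw [hι_apply, hsymm]
    simp [hπ]
  · intro t ht i
    have hHt : H (φ (ι t)) = ι t := (hball (hIoo t ht)).2
    have h1 : (φ (ι t)).1 = t := congrArg Prod.fst hHt
    have h2 : G (φ (ι t)) = 0 := by
      have h3 := congrArg Prod.snd hHt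
      simpa [hH, hι_apply] using h3
    have h4 : f i (ψ (φ (ι t))) = 0 := congrFun h2 i
    have hpt : u + t • d + ∑ j, c j t • v j = ψ (φ (ι t)) := by
      show _ = u + L (φ (ι t))
      rw [hL_apply, h1, hA_apply, add_assoc]
    rw [hpt]
    exact h4

/-- Superlinear correctability: by the implicit function theorem, there are C¹
correction functions `c_i` with `c_i(0) = 0`, `c_i'(0) = 0` keeping the working
constraints exactly active along `u(t) = u + t d + Σ c_i(t) g_i'(u)`. -/
theorem stmt15 {n m k : ℕ} (hk : k ≤ m)
    (J : EuclideanSpace ℝ (Fin n) → ℝ) (hJ : ContDiff ℝ 1 J)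
    (g : Fin m → EuclideanSpace ℝ (Fin n) → ℝ) (hg : ∀ i, ContDiff ℝ 1 (g i))
    (u : EuclideanSpace ℝ (Fin n)) (hu_feas : ∀ i, g i u ≤ 0)
    (hactive : ∀ i : Fin k, g (Fin.castLE hk i) u = 0)
    (hli : LinearIndependent ℝ (fun i : Fin k => gradient (g (Fin.castLE hk i)) u))
    (d : EuclideanSpace ℝ (Fin n))
    (hd : ∀ i : Fin k, ⟪gradient (g (Fin.castLE hk i)) u, d⟫ = 0) :
    ∃ t₀ : ℝ, 0 < t₀ ∧ ∃ c : Fin k → ℝ → ℝ,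
      (∀ i, ContDiffOn ℝ 1 (c i) (Set.Ioo (-t₀) t₀)) ∧
      (∀ i, c i 0 = 0) ∧ (∀ i, deriv (c i) 0 = 0) ∧
      ∀ t : ℝ, |t| < t₀ → ∀ i : Fin k,
        g (Fin.castLE hk i)
          (u + t • d + ∑ j, c j t • gradient (g (Fin.castLE hk j)) u) = 0 := by
  exact stmt15_aux (fun i => g (Fin.castLE hk i)) (fun i => hg _) u hactive hli d hd
end
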